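/- If in addition K₁ is positive semidefinite, η₂ < 0, s₂ ≤ N, and the entries λ₁,…,λ_{s₁} of Λ₁ are nonnegative, then ‖K₁ − H₁Λ₁H₁ᵀ‖²_F ≤ Σ_{i=s₁+1}^{N} λᵢ² − (s₂/η₂ + 2·Σ_{i=1}^{s₂} λ̃ᵢ)·(1/η₂), where λ̃₁ ≥ … ≥ λ̃_N are the eigenvalues of K₁ in decreasing order with multiplicity. -/

import Mathlib

open Matrix Finset

/-- Frobenius norm of a real matrix: `‖A‖_F = sqrt(trace(AᵀA))`. -/
noncomputable def frobNorm {m n : ℕ} (A : Matrix (Fin m) (Fin n) ℝ) : ℝ :=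
  Real.sqrt ((Aᵀ * A).trace)

lemma trace_transpose_mul_self_nonneg {m n : ℕ} (A : Matrix (Fin m) (Fin n) ℝ) :
    0 ≤ (Aᵀ * A).trace := by
  rw [Matrix.trace]
  refine Finset.sum_nonneg fun i _ => ?_
  rw [Matrix.diag_apply, Matrix.mul_apply]
  refine Finset.sum_nonneg fun j _ => ?_
  simp only [Matrix.transpose_apply]
  exact mul_self_nonneg _

lemma frobNorm_sq {m n : ℕ} (A : Matrix (Fin m) (Fin n) ℝ) :
    (frobNorm A) ^ 2 = (Aᵀ * A).trace := by
  rw [frobNorm]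
  exact Real.sq_sqrt (trace_transpose_mul_self_nonneg A)

lemma trace_conj' {N s : ℕ} (H : Matrix (Fin N) (Fin s) ℝ) (hH : Hᵀ * H = 1)
    (X : Matrix (Fin s) (Fin s) ℝ) : (H * X * Hᵀ).trace = X.trace := by
  rw [Matrix.trace_mul_comm, ← Matrix.mul_assoc, hH, Matrix.one_mul]

lemma sum_filter_lt_eq {N s : ℕ} (h : s ≤ N) (f : Fin N → ℝ) :
    ∑ i ∈ Finset.univ.filter (fun i : Fin N => (i : ℕ) < s), f i
      = ∑ i : Fin s, f (Fin.castLE h i) := by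
  rw [show Finset.univ.filter (fun i : Fin N => (i : ℕ) < s)
      = Finset.univ.map (Fin.castLEEmb h) from ?_, Finset.sum_map]
  · simp [Fin.castLEEmb]
  · ext i
    simp only [Finset.mem_filter, Finset.mem_univ, true_and, Finset.mem_map]
    constructor
    · intro hi
      exact ⟨⟨i, hi⟩, Fin.ext rfl⟩
    · rintro ⟨j, rfl⟩; exact j.isLt

set_option maxHeartbeats 1000000 in
/-- Upper bound for the deep approximation error of `K₁` when `η₂ < 0`:
`‖K₁ − H₁Λ₁H₁ᵀ‖²_F ≤ Σ_{i=s₁+1}^{N} λᵢ² − (s₂/η₂ + 2·Σ_{i=1}^{s₂} λ̃ᵢ)·(1/η₂)`. -/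
theorem dkpca_approximation_upper_bound_neg
    (N s₁ s₂ : ℕ) (hNpos : 0 < N) (hs₁pos : 0 < s₁) (hs₂pos : 0 < s₂)
    (hs₁N : s₁ ≤ N) (hs₂N : s₂ ≤ N)
    (η₂ : ℝ) (hη₂ : η₂ < 0)
    (K₁ : Matrix (Fin N) (Fin N) ℝ) (hK₁ : K₁.IsSymm) (hK₁psd : K₁.PosSemidef)
    (H₂ : Matrix (Fin N) (Fin s₂) ℝ) (hH₂ : H₂ᵀ * H₂ = 1)
    (M : Matrix (Fin N) (Fin N) ℝ) (hM : M = K₁ + (1 / η₂) • (H₂ * H₂ᵀ))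
    -- λ₁ ≥ … ≥ λ_N : the eigenvalues of M in decreasing order with multiplicity
    (lam : Fin N → ℝ) (hlam : Antitone lam)
    (U : Matrix (Fin N) (Fin N) ℝ) (hU : Uᵀ * U = 1)
    (hMU : M = U * Matrix.diagonal lam * Uᵀ)
    -- λ̃₁ ≥ … ≥ λ̃_N : the eigenvalues of K₁ in decreasing order with multiplicity
    (lamt : Fin N → ℝ) (hlamt : Antitone lamt)
    (V : Matrix (Fin N) (Fin N) ℝ) (hV : Vᵀ * V = 1)
    (hK₁V : K₁ = V * Matrix.diagonal lamt * Vᵀ)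
    -- Λ₁ = diag(λ₁,…,λ_{s₁}) with nonnegative entries, H₁ orthonormal, M H₁ = H₁ Λ₁
    (Λ₁ : Matrix (Fin s₁) (Fin s₁) ℝ)
    (hΛ₁ : Λ₁ = Matrix.diagonal fun i : Fin s₁ => lam (Fin.castLE hs₁N i))
    (hΛ₁nonneg : ∀ i : Fin s₁, 0 ≤ lam (Fin.castLE hs₁N i))
    (H₁ : Matrix (Fin N) (Fin s₁) ℝ) (hH₁ : H₁ᵀ * H₁ = 1)
    (hMH₁ : M * H₁ = H₁ * Λ₁) :
    (frobNorm (K₁ - H₁ * Λ₁ * H₁ᵀ)) ^ 2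
      ≤ (∑ i ∈ Finset.univ.filter (fun i : Fin N => s₁ ≤ (i : ℕ)), (lam i) ^ 2)
        - ((s₂ : ℝ) / η₂
            + 2 * ∑ i ∈ Finset.univ.filter (fun i : Fin N => (i : ℕ) < s₂), lamt i)
          * (1 / η₂) := by
  classical
  set c : ℝ := 1 / η₂ with hc
  have hcneg : c < 0 := one_div_neg.mpr hη₂
  set P : Matrix (Fin N) (Fin N) ℝ := H₂ * H₂ᵀ with hPdef
  set B : Matrix (Fin N) (Fin N) ℝ := H₁ * Λ₁ * H₁ᵀ with hBdef
  have hVV : V * Vᵀ = 1 := mul_eq_one_comm.mp hV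
  -- P is a projection with trace s₂
  have hPP : P * P = P := by
    rw [hPdef, Matrix.mul_assoc, ← Matrix.mul_assoc H₂ᵀ, hH₂, Matrix.one_mul]
  have htrP : P.trace = (s₂ : ℝ) := by
    rw [hPdef, Matrix.trace_mul_comm, hH₂, Matrix.trace_one]
    simp
  have hK₁eq : K₁ = M - c • P := by rw [hM]; abel
  -- trace of M*M
  have htrM2 : (M * M).trace = ∑ i : Fin N, lam i ^ 2 := by
    have h1 : M * M = U * (Matrix.diagonal lam * Matrix.diagonal lam) * Uᵀ := by
      rw [hMU]
      calc U * Matrix.diagonal lam * Uᵀ * (U * Matrix.diagonal lam * Uᵀ)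
          = U * Matrix.diagonal lam * (Uᵀ * U) * (Matrix.diagonal lam * Uᵀ) := by
            simp only [Matrix.mul_assoc]
        _ = U * (Matrix.diagonal lam * Matrix.diagonal lam) * Uᵀ := by
            rw [hU, Matrix.mul_one]; simp only [Matrix.mul_assoc]
    rw [h1, trace_conj' U hU, Matrix.diagonal_mul_diagonal, Matrix.trace_diagonal]
    exact Finset.sum_congr rfl fun i _ => (sq (lam i)).symm
  -- trace of M*P in terms of t := trace(K₁*P)
  set t : ℝ := (K₁ * P).trace with ht
  have htrMP : (M * P).trace = t + c * s₂ := by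
    rw [hM, Matrix.add_mul, Matrix.smul_mul, Matrix.trace_add, Matrix.trace_smul, hPP, htrP]
    simp [ht, smul_eq_mul]
  -- trace of K₁*K₁
  have htrK2 : (K₁ * K₁).trace = (∑ i : Fin N, lam i ^ 2) - 2 * c * t - c ^ 2 * s₂ := by
    have expand : K₁ * K₁ = M * M - c • (M * P) - c • (P * M) + (c * c) • (P * P) := by
      rw [hK₁eq]
      simp only [Matrix.sub_mul, Matrix.mul_sub, Matrix.smul_mul, Matrix.mul_smul,
        smul_smul, smul_sub]
      abel
    rw [expand, Matrix.trace_add, Matrix.trace_sub, Matrix.trace_sub, Matrix.trace_smul,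
      Matrix.trace_smul, Matrix.trace_smul, Matrix.trace_mul_comm P M, htrMP, htrM2, hPP, htrP]
    simp only [smul_eq_mul]
    ring
  -- trace of Λ₁ * Λ₁
  set trΛ : ℝ := (Λ₁ * Λ₁).trace with htrΛdef
  have htrΛ : trΛ = ∑ i : Fin s₁, lam (Fin.castLE hs₁N i) ^ 2 := by
    rw [htrΛdef, hΛ₁, Matrix.diagonal_mul_diagonal, Matrix.trace_diagonal]
    exact Finset.sum_congr rfl fun i _ => (sq _).symm
  -- trace of M*B
  have htrMB : (M * B).trace = trΛ := by
    have h1 : M * B = H₁ * (Λ₁ * Λ₁) * H₁ᵀ := by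
      rw [hBdef, ← Matrix.mul_assoc, ← Matrix.mul_assoc, hMH₁]
      simp only [Matrix.mul_assoc]
    rw [h1, trace_conj' H₁ hH₁]
  -- trace of B*B
  have htrB2 : (B * B).trace = trΛ := by
    have h1 : B * B = H₁ * Λ₁ * (H₁ᵀ * H₁) * (Λ₁ * H₁ᵀ) := by
      rw [hBdef]; simp only [Matrix.mul_assoc]
    have h2 : B * B = H₁ * (Λ₁ * Λ₁) * H₁ᵀ := by
      rw [h1, hH₁, Matrix.mul_one]; simp only [Matrix.mul_assoc]
    rw [h2, trace_conj' H₁ hH₁]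
  -- r := trace(P*B)
  set r : ℝ := (P * B).trace with hr
  have htrK₁B : (K₁ * B).trace = trΛ - c * r := by
    rw [hK₁eq, Matrix.sub_mul, Matrix.smul_mul, Matrix.trace_sub, Matrix.trace_smul, htrMB]
    simp [smul_eq_mul]
    exact Or.inl hr.symm
  -- symmetry of K₁ - B
  have hBsymm : Bᵀ = B := by
    have hΛsymm : Λ₁ᵀ = Λ₁ := by rw [hΛ₁]; exact Matrix.diagonal_transpose _
    rw [hBdef]
    simp [Matrix.transpose_mul, hΛsymm, Matrix.mul_assoc]
  have hAsymm : (K₁ - B)ᵀ = K₁ - B := by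
    rw [Matrix.transpose_sub, hK₁.eq, hBsymm]
  -- LHS as traces
  have hLHS : (frobNorm (K₁ - H₁ * Λ₁ * H₁ᵀ)) ^ 2
      = (∑ i : Fin N, lam i ^ 2) - trΛ - c ^ 2 * s₂ - 2 * c * t + 2 * c * r := by
    rw [frobNorm_sq, hAsymm]
    have expand : (K₁ - B) * (K₁ - B) = K₁ * K₁ - K₁ * B - B * K₁ + B * B := by
      simp only [Matrix.sub_mul, Matrix.mul_sub]; abel
    rw [expand, Matrix.trace_add, Matrix.trace_sub, Matrix.trace_sub,
      Matrix.trace_mul_comm B K₁, htrK₁B, htrK2, htrB2]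
    ring
  -- r ≥ 0
  have hrnonneg : 0 ≤ r := by
    have h1 : r = (((H₂ᵀ * H₁) * Λ₁) * (H₂ᵀ * H₁)ᵀ).trace := by
      rw [hr, hPdef, hBdef, Matrix.mul_assoc H₂ H₂ᵀ, Matrix.trace_mul_comm H₂,
        Matrix.transpose_mul, Matrix.transpose_transpose]
      congr 1
      simp only [Matrix.mul_assoc]
    rw [h1, Matrix.trace]
    refine Finset.sum_nonneg fun j _ => ?_
    rw [Matrix.diag_apply, Matrix.mul_apply]
    refine Finset.sum_nonneg fun i _ => ?_
    rw [hΛ₁, Matrix.mul_diagonal, Matrix.transpose_apply]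
    have := hΛ₁nonneg i
    nlinarith [sq_nonneg ((H₂ᵀ * H₁) j i)]
  -- Ky Fan: t ≤ ∑_{i < s₂} lamt i
  set L : ℝ := ∑ i ∈ Finset.univ.filter (fun i : Fin N => (i : ℕ) < s₂), lamt i with hL
  have htL : t ≤ L := by
    set W : Matrix (Fin N) (Fin s₂) ℝ := Vᵀ * H₂ with hW
    have hWW : Wᵀ * W = 1 := by
      rw [hW, Matrix.transpose_mul, Matrix.transpose_transpose, Matrix.mul_assoc,
        ← Matrix.mul_assoc V, hVV, Matrix.one_mul, hH₂]
    set Q : Matrix (Fin N) (Fin N) ℝ := W * Wᵀ with hQ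
    have hQQ : Q * Q = Q := by
      rw [hQ, Matrix.mul_assoc, ← Matrix.mul_assoc Wᵀ, hWW, Matrix.one_mul]
    have hQsymm : Qᵀ = Q := by
      rw [hQ, Matrix.transpose_mul, Matrix.transpose_transpose]
    have htQ : t = ∑ j : Fin N, lamt j * Q j j := by
      have h1 : t = (Matrix.diagonal lamt * Q).trace := by
        rw [ht, hK₁V, hQ, hW, Matrix.transpose_mul, Matrix.transpose_transpose,
          show V * Matrix.diagonal lamt * Vᵀ * P
              = V * (Matrix.diagonal lamt * (Vᵀ * P)) from by simp only [Matrix.mul_assoc],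
          Matrix.trace_mul_comm V]
        congr 1
        rw [hPdef]
        simp only [Matrix.mul_assoc]
      rw [h1, Matrix.trace]
      refine Finset.sum_congr rfl fun j _ => ?_
      rw [Matrix.diag_apply, Matrix.diagonal_mul]
    have hq0 : ∀ j, 0 ≤ Q j j := by
      intro j
      rw [hQ, Matrix.mul_apply]
      refine Finset.sum_nonneg fun k _ => ?_
      rw [Matrix.transpose_apply]
      exact mul_self_nonneg _
    have hq1 : ∀ j, Q j j ≤ 1 := by
      intro j
      have hsym' : ∀ a b : Fin N, Q b a = Q a b := fun a b =>
        calc Q b a = Qᵀ a b := (Matrix.transpose_apply Q a b).symm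
          _ = Q a b := by rw [hQsymm]
      have h2 : Q j j = ∑ k : Fin N, (Q j k) ^ 2 := by
        conv_lhs => rw [← hQQ]
        rw [Matrix.mul_apply]
        refine Finset.sum_congr rfl fun k _ => ?_
        rw [hsym' j k]
        ring
      have h3 : (Q j j) ^ 2 ≤ Q j j :=
        calc (Q j j) ^ 2 ≤ ∑ k : Fin N, (Q j k) ^ 2 :=
              Finset.single_le_sum (f := fun k => (Q j k) ^ 2)
                (fun k _ => sq_nonneg _) (Finset.mem_univ j)
          _ = Q j j := h2.symm
      nlinarith only [h3, hq0 j]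
    have hqsum : ∑ j : Fin N, Q j j = (s₂ : ℝ) := by
      have : ∑ j : Fin N, Q j j = Q.trace := rfl
      rw [this, hQ, Matrix.trace_mul_comm, hWW, Matrix.trace_one]
      simp
    -- split and bound
    set c₀ : ℝ := lamt ⟨s₂ - 1, by omega⟩ with hc₀
    have hsum1 : ∑ j ∈ Finset.univ.filter (fun j : Fin N => (j : ℕ) < s₂), (1 : ℝ)
        = (s₂ : ℝ) := by
      rw [sum_filter_lt_eq hs₂N]; simp
    have hb1 : ∀ j ∈ Finset.univ.filter (fun j : Fin N => (j : ℕ) < s₂),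
        lamt j * Q j j ≤ lamt j + c₀ * Q j j - c₀ := by
      intro j hj
      simp only [Finset.mem_filter, Finset.mem_univ, true_and] at hj
      have hle : c₀ ≤ lamt j := hlamt (by rw [Fin.le_def]; simp; omega)
      nlinarith [hq1 j]
    have hb2 : ∀ j ∈ Finset.univ.filter (fun j : Fin N => ¬ ((j : ℕ) < s₂)),
        lamt j * Q j j ≤ c₀ * Q j j := by
      intro j hj
      simp only [Finset.mem_filter, Finset.mem_univ, true_and, not_lt] at hj
      have hle : lamt j ≤ c₀ := hlamt (by rw [Fin.le_def]; simp; omega)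
      nlinarith [hq0 j]
    calc t = ∑ j : Fin N, lamt j * Q j j := htQ
      _ = (∑ j ∈ Finset.univ.filter (fun j : Fin N => (j : ℕ) < s₂), lamt j * Q j j)
          + ∑ j ∈ Finset.univ.filter (fun j : Fin N => ¬ ((j : ℕ) < s₂)), lamt j * Q j j :=
          (Finset.sum_filter_add_sum_filter_not _ _ _).symm
      _ ≤ (∑ j ∈ Finset.univ.filter (fun j : Fin N => (j : ℕ) < s₂),
            (lamt j + c₀ * Q j j - c₀))
          + ∑ j ∈ Finset.univ.filter (fun j : Fin N => ¬ ((j : ℕ) < s₂)), c₀ * Q j j :=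
          add_le_add (Finset.sum_le_sum hb1) (Finset.sum_le_sum hb2)
      _ = L + ((∑ j ∈ Finset.univ.filter (fun j : Fin N => (j : ℕ) < s₂), c₀ * Q j j)
            + ∑ j ∈ Finset.univ.filter (fun j : Fin N => ¬ ((j : ℕ) < s₂)), c₀ * Q j j)
          - c₀ * s₂ := by
          have hconst : (∑ _j ∈ Finset.univ.filter (fun j : Fin N => (j : ℕ) < s₂),
              c₀) = c₀ * s₂ := by
            rw [Finset.sum_const, nsmul_eq_mul]
            have hcardR : ((Finset.univ.filter (fun j : Fin N => (j : ℕ) < s₂)).card : ℝ)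
                = (s₂ : ℝ) := by
              have := hsum1
              rwa [Finset.sum_const, nsmul_eq_mul, mul_one] at this
            rw [hcardR, mul_comm]
          rw [Finset.sum_sub_distrib, Finset.sum_add_distrib, hconst, hL]
          ring
      _ = L + c₀ * (s₂ : ℝ) - c₀ * s₂ := by
          rw [Finset.sum_filter_add_sum_filter_not Finset.univ _
            (fun j : Fin N => c₀ * Q j j), ← Finset.mul_sum, hqsum]
      _ = L := by ring
  -- assemble
  have hsplitlam : (∑ i ∈ Finset.univ.filter (fun i : Fin N => s₁ ≤ (i : ℕ)), lam i ^ 2)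
      = (∑ i : Fin N, lam i ^ 2) - trΛ := by
    have h1 := Finset.sum_filter_add_sum_filter_not Finset.univ
      (fun i : Fin N => (i : ℕ) < s₁) (fun i => lam i ^ 2)
    have h2 : Finset.univ.filter (fun i : Fin N => ¬ ((i : ℕ) < s₁))
        = Finset.univ.filter (fun i : Fin N => s₁ ≤ (i : ℕ)) := by
      ext i; simp [not_lt]
    rw [h2] at h1
    rw [htrΛ, ← sum_filter_lt_eq hs₁N (fun i => lam i ^ 2)]
    linarith
  have hs2c : (s₂ : ℝ) / η₂ = (s₂ : ℝ) * c := by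
    rw [hc]; ring
  have key : c * (r - t + L) ≤ 0 :=
    mul_nonpos_of_nonpos_of_nonneg hcneg.le (by linarith)
  rw [hLHS, hsplitlam, hs2c]
  linarith only [key]
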